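/- For every x in the open unit disk 𝔹², τ̃_{𝔹²}(0, x) = log(1 + |x| / √(1 - |x|)). -/

import Mathlib

/-- The scale invariant Cassinian metric
`τ̃_D(x,y) = log(1 + sup_{p ∈ ∂D} |x-y|/√(|x-p||y-p|))`. -/
noncomputable def scTau {E : Type*} [NormedAddCommGroup E] (D : Set E) (x y : E) : ℝ :=
  Real.log (1 + ⨆ p : frontier D, ‖x - y‖ / Real.sqrt (‖x - (p : E)‖ * ‖y - (p : E)‖))

theorem stmt4 (x : EuclideanSpace ℝ (Fin 2))
    (hx : x ∈ Metric.ball (0 : EuclideanSpace ℝ (Fin 2)) 1) :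
    scTau (Metric.ball (0 : EuclideanSpace ℝ (Fin 2)) 1) 0 x
      = Real.log (1 + ‖x‖ / Real.sqrt (1 - ‖x‖)) := by
  have hx1 : ‖x‖ < 1 := by simpa using hx
  have hxd : (0:ℝ) < 1 - ‖x‖ := by linarith
  have hsne : (Metric.sphere (0 : EuclideanSpace ℝ (Fin 2)) 1).Nonempty :=
    NormedSpace.sphere_nonempty.mpr zero_le_one
  have : Nonempty (Metric.sphere (0 : EuclideanSpace ℝ (Fin 2)) 1) := hsne.to_subtype
  unfold scTau
  rw [frontier_ball _ one_ne_zero]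
  have key : ∀ p : Metric.sphere (0 : EuclideanSpace ℝ (Fin 2)) 1,
      ‖(0:EuclideanSpace ℝ (Fin 2)) - x‖ /
        Real.sqrt (‖(0:EuclideanSpace ℝ (Fin 2)) - (p : EuclideanSpace ℝ (Fin 2))‖ *
          ‖x - (p : EuclideanSpace ℝ (Fin 2))‖) ≤ ‖x‖ / Real.sqrt (1 - ‖x‖) := by
    rintro ⟨p, hp⟩
    have hp1 : ‖p‖ = 1 := by simpa using hp
    have hxp : 1 - ‖x‖ ≤ ‖x - p‖ := by
      have h := norm_sub_norm_le p x
      rw [hp1, norm_sub_rev] at h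
      linarith
    simp only [zero_sub, norm_neg, hp1, one_mul]
    gcongr
  congr 2
  rcases eq_or_ne x 0 with rfl | hx0
  · simp
  · have hxn : (0:ℝ) < ‖x‖ := norm_pos_iff.mpr hx0
    refine le_antisymm (ciSup_le key) ?_
    have hmem : ‖x‖⁻¹ • x ∈ Metric.sphere (0 : EuclideanSpace ℝ (Fin 2)) 1 := by
      simp [norm_smul, abs_of_pos (inv_pos.mpr hxn), inv_mul_cancel₀ hxn.ne']
    have hbdd : BddAbove (Set.range fun p : Metric.sphere (0:EuclideanSpace ℝ (Fin 2)) 1 =>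
        ‖(0:EuclideanSpace ℝ (Fin 2)) - x‖ /
          Real.sqrt (‖(0:EuclideanSpace ℝ (Fin 2)) - (p : EuclideanSpace ℝ (Fin 2))‖ *
            ‖x - (p : EuclideanSpace ℝ (Fin 2))‖)) := by
      refine ⟨‖x‖ / Real.sqrt (1 - ‖x‖), ?_⟩
      rintro _ ⟨p, rfl⟩
      exact key p
    refine le_ciSup_of_le hbdd ⟨‖x‖⁻¹ • x, hmem⟩ ?_
    have hval : ‖x - ‖x‖⁻¹ • x‖ = 1 - ‖x‖ := by
      have : x - ‖x‖⁻¹ • x = (1 - ‖x‖⁻¹) • x := by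
        rw [sub_smul, one_smul]
      rw [this, norm_smul, Real.norm_eq_abs]
      have h1 : (1:ℝ) < ‖x‖⁻¹ := (one_lt_inv₀ hxn).mpr hx1
      rw [abs_of_neg (by linarith)]
      field_simp
      ring
    have hnorm : ‖(0:EuclideanSpace ℝ (Fin 2)) - ‖x‖⁻¹ • x‖ = 1 := by
      simpa using hmem
    simp only [zero_sub, norm_neg] at hnorm ⊢
    rw [hnorm, one_mul, hval]
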